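/- For integers 1 ≤ m ≤ n and any element λ of a commutative ring (or rational/polynomial variable), the double sum over i from m to n and j from m to i of (-1)^(n+i) * [n,i] * C(i,j) * {j,m} * λ^(i-j) equals (n!/m!) * C(λ, n-m), where C(λ, r) = λ(λ-1)⋯(λ-r+1)/r! is the generalized binomial coefficient. -/

import Mathlib

open Finset

/-- Unsigned Stirling numbers of the first kind. -/
def stirling1 : ℕ → ℕ → ℕ
  | 0, 0 => 1
  | 0, _ + 1 => 0
  | _ + 1, 0 => 0
  | n + 1, k + 1 => n * stirling1 n (k + 1) + stirling1 n k

/-- Stirling numbers of the second kind. -/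
def stirling2 : ℕ → ℕ → ℕ
  | 0, 0 => 1
  | 0, _ + 1 => 0
  | _ + 1, 0 => 0
  | n + 1, k + 1 => (k + 1) * stirling2 n (k + 1) + stirling2 n k

/-- Generalized binomial coefficient `C(x, r) = x(x-1)⋯(x-r+1)/r!` in a ℚ-algebra. -/
noncomputable def gchoose {R : Type*} [CommRing R] [Algebra ℚ R] (x : R) (r : ℕ) : R :=
  algebraMap ℚ R ((r.factorial : ℚ)⁻¹) * ∏ i ∈ Finset.range r, (x - i)

open fwdDiff

def ff (x : ℚ) (k : ℕ) : ℚ := ∏ i ∈ Finset.range k, (x - i)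

lemma stirling1_eq_zero {n k : ℕ} (h : n < k) : stirling1 n k = 0 := by
  induction n generalizing k with
  | zero =>
    match k, h with
    | k + 1, _ => rfl
  | succ n ih =>
    match k, h with
    | k + 1, h =>
      rw [stirling1, ih (by omega), ih (by omega)]
      simp

lemma stirling2_eq_zero {n k : ℕ} (h : n < k) : stirling2 n k = 0 := by
  induction n generalizing k with
  | zero =>
    match k, h with
    | k + 1, _ => rfl
  | succ n ih =>
    match k, h with
    | k + 1, h =>
      rw [stirling2, ih (by omega), ih (by omega)]
      simp

lemma ff_succ (x : ℚ) (k : ℕ) : ff x (k+1) = ff x k * (x - k) := Finset.prod_range_succ _ _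

lemma ff_add_one (x : ℚ) (k : ℕ) : ff (x+1) (k+1) = (x+1) * ff x k := by
  rw [ff, Finset.prod_range_succ']
  rw [show ∏ i ∈ Finset.range k, (x + 1 - ((i+1:ℕ):ℚ)) = ff x k from
    Finset.prod_congr rfl fun i _ => by push_cast; ring]
  push_cast; ring

lemma fwdDiff_ff (k : ℕ) : Δ_[(1:ℚ)] (fun x => ff x (k+1)) = fun x => ((k:ℚ)+1) * ff x k := by
  funext x
  simp only [fwdDiff]
  rw [ff_add_one, ff_succ]
  ring

lemma fwdDiff_iter_ff (m : ℕ) : ∀ k : ℕ,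
    Δ_[(1:ℚ)] ^[m] (fun x => ff x k)
      = fun x => (∏ i ∈ Finset.range m, ((k:ℚ) - i)) * ff x (k - m) := by
  induction m with
  | zero => intro k; funext x; simp
  | succ m ih =>
    intro k
    rw [Function.iterate_succ_apply]
    cases k with
    | zero =>
      have h0 : Δ_[(1:ℚ)] (fun x => ff x 0) = fun _ => (0:ℚ) := by
        funext x; simp [fwdDiff, ff]
      rw [h0]
      have hz : ∀ p : ℕ, Δ_[(1:ℚ)] ^[p] (fun _ => (0:ℚ)) = fun _ => (0:ℚ) := by
        intro p
        induction p with
        | zero => rfl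
        | succ p ihp =>
          rw [Function.iterate_succ_apply,
            show Δ_[(1:ℚ)] (fun _ => (0:ℚ)) = fun _ => (0:ℚ) from funext fun x => by
              simp [fwdDiff]]
          exact ihp
      rw [hz]
      funext x
      rw [Finset.prod_range_succ']
      simp
    | succ k =>
      rw [fwdDiff_ff]
      have hs : (fun x => ((k:ℚ)+1) * ff x k) = ((k:ℚ)+1) • (fun x => ff x k) := by
        funext x; simp [smul_eq_mul]
      rw [hs, fwdDiff_iter_const_smul, ih]
      funext x
      simp only [Pi.smul_apply, smul_eq_mul]
      rw [Finset.prod_range_succ',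
        show ∏ i ∈ Finset.range m, (((k+1:ℕ):ℚ) - ((i+1:ℕ):ℚ)) = ∏ i ∈ Finset.range m, ((k:ℚ) - i) from
          Finset.prod_congr rfl fun i _ => by push_cast; ring,
        Nat.succ_sub_succ]
      push_cast; ring

lemma sum_ff_eval (m k : ℕ) (x : ℚ) :
    ∑ t ∈ Finset.range (m+1), (-1:ℚ)^(m+t) * (m.choose t) * ff (x + t) k
      = (∏ i ∈ Finset.range m, ((k:ℚ) - i)) * ff x (k - m) := by
  have h := fwdDiff_iter_eq_sum_shift (1:ℚ) (fun y => ff y k) m x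
  rw [fwdDiff_iter_ff] at h
  simp only [zsmul_eq_mul, nsmul_eq_mul, mul_one] at h
  rw [h]
  apply Finset.sum_congr rfl
  intro t ht
  have ht' : t ≤ m := Nat.lt_succ_iff.mp (Finset.mem_range.mp ht)
  have hsign : (-1:ℚ)^(m+t) = (-1:ℚ)^(m-t) := by
    rw [show m + t = m - t + 2*t by omega, pow_add, pow_mul]
    norm_num
  push_cast
  rw [hsign]

lemma ff_zero_eq (r : ℕ) (hr : 1 ≤ r) : ff 0 r = 0 := by
  rw [ff]
  apply Finset.prod_eq_zero (Finset.mem_range.mpr (by omega : 0 < r))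
  simp

lemma prod_range_factorial (n m : ℕ) (h : m ≤ n) :
    (∏ i ∈ Finset.range m, ((n:ℚ) - i)) * ((n-m).factorial : ℚ) = (n.factorial : ℚ) := by
  induction m with
  | zero => simp
  | succ m ih =>
    have hm : m ≤ n := by omega
    rw [Finset.prod_range_succ]
    have h1 : ((n:ℚ) - m) = ((n - m : ℕ) : ℚ) := by
      push_cast [Nat.cast_sub hm]; ring
    have h2 : n - m = (n - (m+1)) + 1 := by omega
    rw [h1, h2, ← ih hm, h2, Nat.factorial_succ]
    push_cast
    ring

lemma pow_eq_sum_stirling2_ff (j : ℕ) (x : ℚ) :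
    x ^ j = ∑ k ∈ Finset.range (j+1), (stirling2 j k : ℚ) * ff x k := by
  induction j with
  | zero => simp [ff, stirling2]
  | succ j ih =>
    have step1 : x ^ (j+1)
        = ∑ k ∈ Finset.range (j+1), (stirling2 j k : ℚ) * ff x (k+1)
          + ∑ k ∈ Finset.range (j+1), (k:ℚ) * (stirling2 j k : ℚ) * ff x k := by
      rw [pow_succ, ih, Finset.sum_mul, ← Finset.sum_add_distrib]
      apply Finset.sum_congr rfl
      intro k _
      rw [ff_succ]
      ring
    have step2 : ∑ k ∈ Finset.range (j+1), (k:ℚ) * (stirling2 j k : ℚ) * ff x k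
        = ∑ k ∈ Finset.range (j+1), ((k:ℚ)+1) * (stirling2 j (k+1) : ℚ) * ff x (k+1) := by
      rw [Finset.sum_range_succ' (fun k => (k:ℚ) * (stirling2 j k : ℚ) * ff x k) j,
        Finset.sum_range_succ (fun k => ((k:ℚ)+1) * (stirling2 j (k+1) : ℚ) * ff x (k+1)) j,
        stirling2_eq_zero (Nat.lt_succ_self j)]
      simp only [Nat.cast_zero, zero_mul, mul_zero, add_zero, Nat.cast_add, Nat.cast_one]
    rw [step1, step2,
      Finset.sum_range_succ' (fun k => (stirling2 (j+1) k : ℚ) * ff x k) (j+1),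
      show stirling2 (j+1) 0 = 0 from rfl]
    simp only [Nat.cast_zero, zero_mul, add_zero]
    rw [← Finset.sum_add_distrib]
    apply Finset.sum_congr rfl
    intro k _
    rw [show stirling2 (j+1) (k+1) = (k+1) * stirling2 j (k+1) + stirling2 j k from rfl]
    push_cast
    ring

lemma sum_pow_eq_stirling2 (m j : ℕ) :
    ∑ t ∈ Finset.range (m+1), (-1:ℚ)^(m+t) * (m.choose t) * (t:ℚ)^j
      = (m.factorial : ℚ) * (stirling2 j m : ℚ) := by
  have step1 : ∑ t ∈ Finset.range (m+1), (-1:ℚ)^(m+t) * (m.choose t) * (t:ℚ)^j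
      = ∑ k ∈ Finset.range (j+1), (stirling2 j k : ℚ) *
          ∑ t ∈ Finset.range (m+1), (-1:ℚ)^(m+t) * (m.choose t) * ff ((0:ℚ) + t) k := by
    calc ∑ t ∈ Finset.range (m+1), (-1:ℚ)^(m+t) * (m.choose t) * (t:ℚ)^j
        = ∑ t ∈ Finset.range (m+1), ∑ k ∈ Finset.range (j+1),
            (stirling2 j k : ℚ) * ((-1:ℚ)^(m+t) * (m.choose t) * ff ((0:ℚ) + t) k) := by
          apply Finset.sum_congr rfl
          intro t _
          rw [show ((t:ℚ))^j = ∑ k ∈ Finset.range (j+1), (stirling2 j k : ℚ) * ff (t:ℚ) k from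
            pow_eq_sum_stirling2_ff j t, Finset.mul_sum]
          apply Finset.sum_congr rfl
          intro k _
          rw [zero_add]
          ring
      _ = ∑ k ∈ Finset.range (j+1), ∑ t ∈ Finset.range (m+1),
            (stirling2 j k : ℚ) * ((-1:ℚ)^(m+t) * (m.choose t) * ff ((0:ℚ) + t) k) :=
          Finset.sum_comm
      _ = _ := by
          apply Finset.sum_congr rfl
          intro k _
          rw [Finset.mul_sum]
  rw [step1]
  have hterm : ∀ k ∈ Finset.range (j+1), k ≠ m →
      (stirling2 j k : ℚ) * ((∏ i ∈ Finset.range m, ((k:ℚ) - i)) * ff 0 (k - m)) = 0 := by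
    intro k _ hk
    rcases lt_or_gt_of_ne hk with hlt | hgt
    · rw [Finset.prod_eq_zero (Finset.mem_range.mpr hlt) (by simp : ((k:ℚ) - (k:ℚ)) = 0)]
      ring
    · rw [ff_zero_eq _ (by omega)]
      ring
  by_cases hmj : m ≤ j
  · rw [Finset.sum_eq_single_of_mem m (Finset.mem_range.mpr (by omega))
      (by intro k hk hkm
          rw [sum_ff_eval]
          exact hterm k hk hkm)]
    rw [sum_ff_eval, Nat.sub_self, show ff 0 0 = 1 from rfl, mul_one]
    have : (∏ i ∈ Finset.range m, ((m:ℚ) - i)) = (m.factorial : ℚ) := by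
      have := prod_range_factorial m m le_rfl
      simpa using this
    rw [this]; ring
  · rw [Finset.sum_eq_zero (by
      intro k hk
      have hkj := Finset.mem_range.mp hk
      rw [sum_ff_eval]
      exact hterm k hk (by omega : k ≠ m))]
    rw [stirling2_eq_zero (by omega : j < m)]
    simp

lemma stirling1_n0 (n : ℕ) : (n:ℚ) * (stirling1 n 0 : ℚ) = 0 := by
  cases n with
  | zero => simp
  | succ n => rw [show stirling1 (n+1) 0 = 0 from rfl]; simp

lemma ff_eq_sum_stirling1 (n : ℕ) (x : ℚ) :
    ff x n = ∑ i ∈ Finset.range (n+1), (-1:ℚ)^(n+i) * (stirling1 n i : ℚ) * x^i := by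
  induction n with
  | zero => simp [ff, stirling1]
  | succ n ih =>
    rw [ff_succ, ih,
      Finset.sum_range_succ' (fun i => (-1:ℚ)^(n+1+i) * (stirling1 (n+1) i : ℚ) * x^i) (n+1),
      show stirling1 (n+1) 0 = 0 from rfl]
    simp only [Nat.cast_zero, mul_zero, zero_mul, add_zero, pow_zero, mul_one]
    have hsplit : ∀ i, (-1:ℚ)^(n+1+(i+1)) * (stirling1 (n+1) (i+1) : ℚ) * x^(i+1)
        = (-1:ℚ)^(n+i) * ((n:ℚ) * (stirling1 n (i+1):ℚ)) * x^(i+1)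
          + (-1:ℚ)^(n+i) * (stirling1 n i:ℚ) * x^(i+1) := by
      intro i
      rw [show stirling1 (n+1) (i+1) = n * stirling1 n (i+1) + stirling1 n i from rfl,
        show n+1+(i+1) = (n+i)+2 by omega, pow_add]
      push_cast
      ring
    rw [Finset.sum_congr rfl (fun i _ => hsplit i), Finset.sum_add_distrib]
    have hC : ∑ i ∈ Finset.range (n+1), (-1:ℚ)^(n+i) * ((n:ℚ) * (stirling1 n (i+1):ℚ)) * x^(i+1)
        = -(n:ℚ) * ∑ i ∈ Finset.range (n+1), (-1:ℚ)^(n+i) * (stirling1 n i:ℚ) * x^i := by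
      rw [Finset.sum_range_succ (fun i => (-1:ℚ)^(n+i) * ((n:ℚ)*(stirling1 n (i+1):ℚ)) * x^(i+1)) n,
        stirling1_eq_zero (Nat.lt_succ_self n),
        Finset.sum_range_succ' (fun i => (-1:ℚ)^(n+i) * (stirling1 n i:ℚ) * x^i) n,
        mul_add, Finset.mul_sum]
      rw [show -(n:ℚ) * ((-1:ℚ)^(n+0) * (stirling1 n 0:ℚ) * x^0) = 0 by
        rw [show -(n:ℚ) * ((-1:ℚ)^(n+0) * (stirling1 n 0:ℚ) * x^0)
            = -((-1:ℚ)^(n+0) * x^0 * ((n:ℚ) * (stirling1 n 0:ℚ))) by ring, stirling1_n0]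
        ring]
      simp only [Nat.cast_zero, mul_zero, zero_mul, add_zero]
      apply Finset.sum_congr rfl
      intro i _
      rw [show n+(i+1) = (n+i)+1 by omega, pow_add]
      ring
    rw [hC]
    have hS2 : ∑ i ∈ Finset.range (n+1), (-1:ℚ)^(n+i) * (stirling1 n i:ℚ) * x^(i+1)
        = (∑ i ∈ Finset.range (n+1), (-1:ℚ)^(n+i) * (stirling1 n i:ℚ) * x^i) * x := by
      rw [Finset.sum_mul]
      apply Finset.sum_congr rfl
      intro i _
      rw [pow_succ]
      ring
    rw [hS2]
    ring

theorem stmt2' (m n : ℕ) (hm : 1 ≤ m) (hmn : m ≤ n) (l : ℚ) :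
    ∑ i ∈ Finset.Icc m n, ∑ j ∈ Finset.Icc m i,
        (-1 : ℚ) ^ (n + i) * stirling1 n i * i.choose j * stirling2 j m * l ^ (i - j) =
      (n.factorial : ℚ) / m.factorial * ((n-m).factorial : ℚ)⁻¹ * ff l (n - m) := by
  set c : ℚ := ((m.factorial : ℚ))⁻¹ with hc
  have hfac : (m.factorial : ℚ) ≠ 0 := Nat.cast_ne_zero.mpr m.factorial_ne_zero
  -- step 1: extend ranges
  have h1 : ∑ i ∈ Finset.Icc m n, ∑ j ∈ Finset.Icc m i,
        (-1 : ℚ) ^ (n + i) * stirling1 n i * i.choose j * stirling2 j m * l ^ (i - j)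
      = ∑ i ∈ Finset.range (n+1), ∑ j ∈ Finset.range (i+1),
        (-1 : ℚ) ^ (n + i) * stirling1 n i * i.choose j * stirling2 j m * l ^ (i - j) := by
    rw [show ∑ i ∈ Finset.Icc m n, ∑ j ∈ Finset.Icc m i,
        (-1 : ℚ) ^ (n + i) * stirling1 n i * i.choose j * stirling2 j m * l ^ (i - j)
      = ∑ i ∈ Finset.Icc m n, ∑ j ∈ Finset.range (i+1),
        (-1 : ℚ) ^ (n + i) * stirling1 n i * i.choose j * stirling2 j m * l ^ (i - j) from
      Finset.sum_congr rfl fun i hi => Finset.sum_subset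
        (fun j hj => Finset.mem_range.mpr (by
          have := (Finset.mem_Icc.mp hj).2; omega))
        (fun j hj hj' => by
          have hji : j ≤ i := by have := Finset.mem_range.mp hj; omega
          have hjm : j < m := by
            by_contra hh
            exact hj' (Finset.mem_Icc.mpr ⟨by omega, hji⟩)
          rw [stirling2_eq_zero hjm]
          push_cast; ring)]
    apply Finset.sum_subset
    · intro i hi
      have := (Finset.mem_Icc.mp hi).2
      exact Finset.mem_range.mpr (by omega)
    · intro i hi hi'
      have him : i < m := by
        have hin : i ≤ n := by have := Finset.mem_range.mp hi; omega
        by_contra hh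
        exact hi' (Finset.mem_Icc.mpr ⟨by omega, hin⟩)
      apply Finset.sum_eq_zero
      intro j hj
      have hjm : j < m := by have := Finset.mem_range.mp hj; omega
      rw [stirling2_eq_zero hjm]
      push_cast; ring
  rw [h1]
  -- step 2: replace stirling2 by alternating sum
  have h2 : ∀ j, (stirling2 j m : ℚ)
      = c * ∑ t ∈ Finset.range (m+1), (-1:ℚ)^(m+t) * (m.choose t) * (t:ℚ)^j := by
    intro j
    rw [sum_pow_eq_stirling2 m j, hc]
    field_simp
  -- step 3: inner rearrangement
  have hinner : ∀ i, ∑ j ∈ Finset.range (i+1),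
        (-1 : ℚ) ^ (n + i) * stirling1 n i * i.choose j * stirling2 j m * l ^ (i - j)
      = ∑ t ∈ Finset.range (m+1), c * ((-1:ℚ)^(m+t) * (m.choose t)) *
          ((-1:ℚ)^(n+i) * stirling1 n i) * ((t:ℚ) + l)^i := by
    intro i
    calc ∑ j ∈ Finset.range (i+1),
          (-1 : ℚ) ^ (n + i) * stirling1 n i * i.choose j * stirling2 j m * l ^ (i - j)
        = ∑ j ∈ Finset.range (i+1), ∑ t ∈ Finset.range (m+1),
            c * ((-1:ℚ)^(m+t) * (m.choose t)) * ((-1:ℚ)^(n+i) * stirling1 n i) *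
              ((t:ℚ)^j * l^(i-j) * (i.choose j : ℚ)) := by
          apply Finset.sum_congr rfl
          intro j _
          rw [h2 j]
          rw [show (-1 : ℚ) ^ (n + i) * (stirling1 n i : ℚ) * (i.choose j : ℚ) *
              (c * ∑ t ∈ Finset.range (m+1), (-1:ℚ)^(m+t) * (m.choose t) * (t:ℚ)^j) * l ^ (i - j)
            = (∑ t ∈ Finset.range (m+1), (-1:ℚ)^(m+t) * (m.choose t) * (t:ℚ)^j) *
              (c * ((-1 : ℚ) ^ (n + i) * (stirling1 n i : ℚ)) * ((i.choose j : ℚ) * l ^ (i - j)))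
            by ring, Finset.sum_mul]
          apply Finset.sum_congr rfl
          intro t _
          ring
      _ = ∑ t ∈ Finset.range (m+1), ∑ j ∈ Finset.range (i+1),
            c * ((-1:ℚ)^(m+t) * (m.choose t)) * ((-1:ℚ)^(n+i) * stirling1 n i) *
              ((t:ℚ)^j * l^(i-j) * (i.choose j : ℚ)) := Finset.sum_comm
      _ = _ := by
          apply Finset.sum_congr rfl
          intro t _
          rw [add_pow, Finset.mul_sum]
  rw [Finset.sum_congr rfl (fun i _ => hinner i), Finset.sum_comm]
  -- step 4: sum over i gives falling factorial
  have h4 : ∀ t : ℕ, ∑ i ∈ Finset.range (n+1),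
        c * ((-1:ℚ)^(m+t) * (m.choose t)) * ((-1:ℚ)^(n+i) * stirling1 n i) * ((t:ℚ) + l)^i
      = c * ((-1:ℚ)^(m+t) * (m.choose t) * ff (l + (t:ℚ)) n) := by
    intro t
    rw [show ff (l + (t:ℚ)) n = ff ((t:ℚ) + l) n by rw [add_comm],
      ff_eq_sum_stirling1 n ((t:ℚ) + l)]
    rw [Finset.mul_sum, Finset.mul_sum]
    apply Finset.sum_congr rfl
    intro i _
    ring
  rw [Finset.sum_congr rfl (fun t _ => h4 t), ← Finset.mul_sum, sum_ff_eval m n l]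
  -- step 5: numerics
  have hP := prod_range_factorial n m hmn
  have hfac2 : ((n-m).factorial : ℚ) ≠ 0 := Nat.cast_ne_zero.mpr (n-m).factorial_ne_zero
  rw [hc]
  field_simp
  linear_combination (ff l (n-m)) * hP

theorem stmt2 (m n : ℕ) (hm : 1 ≤ m) (hmn : m ≤ n) (l : ℚ) :
    ∑ i ∈ Finset.Icc m n, ∑ j ∈ Finset.Icc m i,
        (-1 : ℚ) ^ (n + i) * stirling1 n i * i.choose j * stirling2 j m * l ^ (i - j) =
      (n.factorial : ℚ) / m.factorial * gchoose l (n - m) := by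
  rw [show (n.factorial : ℚ) / m.factorial * gchoose l (n - m)
      = (n.factorial : ℚ) / m.factorial * ((n-m).factorial : ℚ)⁻¹ * ff l (n - m) by
    rw [gchoose, ff]
    simp [Algebra.algebraMap_self]
    ring]
  exact stmt2' m n hm hmn l
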